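/- arXiv:2112.02404 — 3 statements merged into one kernel-verified Lean document; each statement's English description precedes it below -/
import Mathlib

section
/- Favorable propagation holds for the uniform cylindrical array under vertical expansion: let d > 0 and 0 < d_v < 1/2 be the fixed horizontal and vertical element spacings, let N ≥ 2 be a fixed number of elements per ring with R_N = d/(2 sin(π/N)), and let M ≥ 2 users have azimuths φ_i ∈ ℝ and polar angles θ_i ∈ [0, π] with θ_1 ≠ θ_i for every i = 2, …, M. For N_c ≥ 1 let h_{ih} ∈ ℂ^N have entries exp(i·2πR_N sin θ_i cos(φ_i − 2πn/N)), n = 0,…,N−1, let h_{iv} ∈ ℂ^{N_c} have entries exp(i·2π(m−1) d_v cos θ_i), m = 1,…,N_c, and set α_i = ⟨h_{1h} ⊗ h_{1v}, h_{ih} ⊗ h_{iv}⟩/(N_c N). Then lim_{N_c→∞} ∑_{i=2}^{M} |α_i|² = 0. -/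
open Real Complex Filter Finset

/-- Kronecker product of two complex vectors: `(a ⊗ b)` indexed so that entry
`(m, n)` (under the standard bijection `Fin p × Fin q ≃ Fin (p*q)`) is `a_m · b_n`. -/
noncomputable def kron {p q : ℕ} (a : Fin p → ℂ) (b : Fin q → ℂ) : Fin (p * q) → ℂ :=
  fun k => a (finProdFinEquiv.symm k).1 * b (finProdFinEquiv.symm k).2

/-- Inner product on `ℂ^p`, conjugate-linear in the first argument: `⟨a, b⟩ = a⁺ b`. -/
noncomputable def cinner {p : ℕ} (a b : Fin p → ℂ) : ℂ :=
  ∑ i, (starRingEnd ℂ) (a i) * b i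

lemma cinner_kron {p q : ℕ} (a c : Fin p → ℂ) (b d : Fin q → ℂ) :
    cinner (kron a b) (kron c d) = cinner a c * cinner b d := by
  unfold cinner kron
  rw [Finset.sum_mul_sum, ← Equiv.sum_comp finProdFinEquiv
    (fun k => (starRingEnd ℂ) (a (finProdFinEquiv.symm k).1 * b (finProdFinEquiv.symm k).2) *
        (c (finProdFinEquiv.symm k).1 * d (finProdFinEquiv.symm k).2)), Fintype.sum_prod_type]
  apply Finset.sum_congr rfl
  intro x _
  apply Finset.sum_congr rfl
  intro y _
  simp only [Equiv.symm_apply_apply, map_mul]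
  ring

lemma exp_ne_one_of (c : ℝ) (hc : c ≠ 0) (hc2 : |c| < 2 * π) :
    Complex.exp (Complex.I * c) ≠ 1 := by
  intro h
  rw [Complex.exp_eq_one_iff] at h
  obtain ⟨n, hn⟩ := h
  rw [mul_comm] at hn
  have hn' : (c : ℂ) = ((n : ℝ) * (2 * π) : ℝ) := by
    push_cast
    apply mul_right_cancel₀ Complex.I_ne_zero
    linear_combination hn
  have hcr : c = (n : ℝ) * (2 * π) := by exact_mod_cast hn'
  have hpi := Real.pi_pos
  have habs : |(n : ℝ)| * (2 * π) < 2 * π := by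
    calc |(n : ℝ)| * (2 * π) = |(n:ℝ) * (2*π)| := by
          rw [abs_mul, abs_of_pos (show (0:ℝ) < 2 * π by linarith)]
      _ = |c| := by rw [hcr]
      _ < 2 * π := hc2
  have hn1 : |(n : ℝ)| < 1 := by
    by_contra hge
    push_neg at hge
    nlinarith
  have hn0 : n = 0 := by
    rw [← Int.abs_lt_one_iff]
    exact_mod_cast (show |((n:ℤ):ℝ)| < 1 from hn1)
  exact hc (by simp [hn0] at hcr; exact hcr)

/-- Favorable propagation for the uniform cylindrical array under
vertical expansion (`N_c → ∞`, fixed ring size `N ≥ 2`), with vertical spacing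
`0 < d_v < 1/2` and `θ_1 ≠ θ_i` for every `i = 2,…,M` (polar angles in `[0, π]`).
Here `h_{ih} ∈ ℂ^N` is the UCA steering vector with `R_N = d/(2 sin(π/N))`,
`h_{iv}(N_c) ∈ ℂ^{N_c}` the vertical ULA steering vector, and
`α_i = ⟨h_{1h} ⊗ h_{1v}, h_{ih} ⊗ h_{iv}⟩/(N_c N)`. -/
theorem ucla_favorable_propagation_vertical
    (d dv : ℝ) (hd : 0 < d) (hdv : 0 < dv) (hdv2 : dv < 1 / 2)
    (N : ℕ) (hN : 2 ≤ N) (M : ℕ) (hM : 2 ≤ M)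
    (φ θ : ℕ → ℝ) (hθ : ∀ i, θ i ∈ Set.Icc (0 : ℝ) π)
    (hθdist : ∀ i, 2 ≤ i → i ≤ M → θ 1 ≠ θ i)
    (hh : (i : ℕ) → Fin N → ℂ)
    (hhdef : ∀ i (n : Fin N), hh i n = Complex.exp (Complex.I *
      ((2 * π * (d / (2 * Real.sin (π / N))) * Real.sin (θ i) *
        Real.cos (φ i - 2 * π * n / N) : ℝ) : ℂ)))
    (hv : (i : ℕ) → (Nc : ℕ) → Fin Nc → ℂ)
    (hvdef : ∀ i Nc (m : Fin Nc), hv i Nc m = Complex.exp (Complex.I *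
      ((2 * π * (m : ℕ) * dv * Real.cos (θ i) : ℝ) : ℂ))) :
    Tendsto (fun Nc : ℕ =>
      ∑ i ∈ Finset.Icc 2 M,
        ‖cinner (kron (hh 1) (hv 1 Nc)) (kron (hh i) (hv i Nc))
          / ((Nc : ℂ) * (N : ℂ))‖ ^ 2)
      atTop (nhds 0) := by
  have hpi := Real.pi_pos
  have hsum0 : (0 : ℝ) = ∑ i ∈ Finset.Icc 2 M, (0 : ℝ) := by simp
  rw [hsum0]
  apply tendsto_finset_sum
  intro i hi
  rw [Finset.mem_Icc] at hi
  have hθne := hθdist i hi.1 hi.2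
  set Δ : ℝ := Real.cos (θ i) - Real.cos (θ 1) with hΔdef
  have hΔ : Δ ≠ 0 := by
    rw [hΔdef, sub_ne_zero]
    intro h
    exact hθne (Real.injOn_cos (hθ i) (hθ 1) h).symm
  have hΔle : |Δ| ≤ 2 := by
    rw [hΔdef]
    have h1 := Real.abs_cos_le_one (θ i)
    have h2 := Real.abs_cos_le_one (θ 1)
    calc |Real.cos (θ i) - Real.cos (θ 1)| ≤ |Real.cos (θ i)| + |Real.cos (θ 1)| :=
          abs_sub _ _
      _ ≤ 2 := by linarith
  set c : ℝ := 2 * π * dv * Δ with hcdef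
  set z : ℂ := Complex.exp (Complex.I * c) with hzdef
  have hc0 : c ≠ 0 := by
    rw [hcdef]
    positivity
  have hcabs : |c| < 2 * π := by
    rw [hcdef, abs_mul, abs_of_pos (by positivity : (0:ℝ) < 2 * π * dv)]
    calc 2 * π * dv * |Δ| ≤ 2 * π * dv * 2 := by
          apply mul_le_mul_of_nonneg_left hΔle (by positivity)
      _ < 2 * π := by nlinarith
  have hz1 : z ≠ 1 := exp_ne_one_of c hc0 hcabs
  have hzabs : ‖z‖ = 1 := by
    rw [hzdef, mul_comm]
    exact Complex.norm_exp_ofReal_mul_I c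
  have hzd : 0 < ‖z - 1‖ := by
    rw [norm_pos_iff]
    exact sub_ne_zero.mpr hz1
  -- vertical inner product is a geometric sum
  have hvsum : ∀ Nc : ℕ, cinner (hv 1 Nc) (hv i Nc) = ∑ m ∈ Finset.range Nc, z ^ m := by
    intro Nc
    unfold cinner
    have hterm : ∀ m : Fin Nc, (starRingEnd ℂ) (hv 1 Nc m) * hv i Nc m = z ^ (m : ℕ) := by
      intro m
      rw [hvdef, hvdef, ← Complex.exp_conj, ← Complex.exp_add, hzdef, ← Complex.exp_nat_mul]
      congr 1
      simp only [map_mul, Complex.conj_I, Complex.conj_ofReal]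
      rw [hcdef, hΔdef]
      push_cast
      ring
    calc ∑ m : Fin Nc, (starRingEnd ℂ) (hv 1 Nc m) * hv i Nc m
        = ∑ m : Fin Nc, z ^ (m : ℕ) := by
          exact Finset.sum_congr rfl fun m _ => hterm m
      _ = ∑ m ∈ Finset.range Nc, z ^ m := Fin.sum_univ_eq_sum_range (fun m => z ^ m) Nc
  -- bounds
  have hvbound : ∀ Nc : ℕ, ‖cinner (hv 1 Nc) (hv i Nc)‖ ≤ 2 / ‖z - 1‖ := by
    intro Nc
    rw [hvsum Nc, geom_sum_eq hz1, norm_div]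
    refine (div_le_div_iff_of_pos_right hzd).mpr ?_
    calc ‖z ^ Nc - 1‖ ≤ ‖z ^ Nc‖ + ‖(1:ℂ)‖ :=
          norm_sub_le _ _
      _ = 2 := by rw [norm_pow, hzabs, norm_one]; norm_num
  have hhbound : ‖cinner (hh 1) (hh i)‖ ≤ N := by
    unfold cinner
    calc ‖∑ n : Fin N, (starRingEnd ℂ) (hh 1 n) * hh i n‖
        ≤ ∑ n : Fin N, ‖(starRingEnd ℂ) (hh 1 n) * hh i n‖ :=
          by exact norm_sum_le _ _
      _ ≤ ∑ n : Fin N, 1 := by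
          apply Finset.sum_le_sum
          intro n _
          rw [norm_mul, Complex.norm_conj, hhdef, hhdef, mul_comm Complex.I, mul_comm Complex.I,
            Complex.norm_exp_ofReal_mul_I, Complex.norm_exp_ofReal_mul_I]
          norm_num
      _ = N := by simp
  set A := ‖z - 1‖ with hA
  have hNpos : (0:ℝ) < N := by positivity
  have key : ∀ Nc : ℕ, 1 ≤ Nc →
      ‖cinner (kron (hh 1) (hv 1 Nc)) (kron (hh i) (hv i Nc))
        / ((Nc : ℂ) * (N : ℂ))‖ ≤ (2 / A) / Nc := by
    intro Nc hNc
    have hNcpos : (0:ℝ) < Nc := by exact_mod_cast hNc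
    rw [cinner_kron, norm_div, norm_mul]
    have hd2 : ‖(Nc : ℂ) * (N : ℂ)‖ = (Nc : ℝ) * N := by
      rw [norm_mul, Complex.norm_natCast, Complex.norm_natCast]
    rw [hd2]
    have h1 : ‖cinner (hh 1) (hh i)‖ * ‖cinner (hv 1 Nc) (hv i Nc)‖
        ≤ (N : ℝ) * (2 / A) :=
      mul_le_mul hhbound (hvbound Nc) (norm_nonneg _) hNpos.le
    calc ‖cinner (hh 1) (hh i)‖ * ‖cinner (hv 1 Nc) (hv i Nc)‖
          / ((Nc : ℝ) * N)
        ≤ ((N : ℝ) * (2 / A)) / ((Nc : ℝ) * N) := by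
          apply div_le_div_of_nonneg_right h1 (by positivity) |>.trans_eq rfl
      _ = (2 / A) / Nc := by field_simp
  apply squeeze_zero' (Filter.Eventually.of_forall fun Nc => by positivity)
  · filter_upwards [Filter.eventually_ge_atTop 1] with Nc hNc
    exact pow_le_pow_left₀ (norm_nonneg _) (key Nc hNc) 2
  · have := (tendsto_const_div_atTop_nhds_zero_nat (2 / A)).pow 2
    simpa using this
end

section
/- Kapteyn's inequality: for every integer n ≥ 1 and every real x with |x| ≤ 1, the Bessel function of the first kind satisfies |J_n(n x)| ≤ ( |x| · exp(√(1 − x²)) / (1 + √(1 − x²)) )^n. -/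
open Real intervalIntegral

/-- Bessel function of the first kind of integer order `n`:
`J_n(x) = (1/π) ∫₀^π cos(nθ − x sin θ) dθ`. -/
noncomputable def besselJ (n : ℤ) (x : ℝ) : ℝ :=
  (1 / π) * ∫ θ in (0 : ℝ)..π, Real.cos (n * θ - x * Real.sin θ)

/-- The Laurent "generating" integrand `exp((y/2)(t − 1/t)) t^{-(n+1)}`. -/
noncomputable def kapF (n : ℕ) (y : ℝ) : ℂ → ℂ :=
  fun t => Complex.exp ((y : ℂ) / 2 * (t - t⁻¹)) * t ^ (-(n + 1 : ℤ))

lemma kapF_diff (n : ℕ) (y : ℝ) {z : ℂ} (hz : z ≠ 0) :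
    DifferentiableAt ℂ (kapF n y) z := by
  apply DifferentiableAt.mul
  · exact (((differentiableAt_const _).mul
      (differentiableAt_id.sub (differentiableAt_inv hz))).cexp)
  · exact differentiableAt_zpow.mpr (Or.inl hz)

lemma integrand_eq (n : ℕ) (y : ℝ) (θ : ℝ) :
    deriv (circleMap 0 1) θ • kapF n y (circleMap 0 1 θ) =
      Complex.I * Complex.exp (Complex.I * (y * Real.sin θ - n * θ)) := by
  have h1 : circleMap 0 1 θ = Complex.exp (θ * Complex.I) := by
    simp [circleMap]
  rw [deriv_circleMap, h1, kapF]
  rw [← Complex.exp_neg]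
  rw [← Complex.exp_int_mul]
  rw [smul_eq_mul]
  have hsin : Complex.exp (θ * Complex.I) - Complex.exp (-(θ * Complex.I)) =
      2 * Complex.I * Real.sin θ := by
    rw [Complex.ofReal_sin, Complex.sin]
    ring_nf
    rw [Complex.I_sq]
    ring
  rw [hsin, ← Complex.exp_add, mul_comm (Complex.exp _) Complex.I, mul_assoc,
    ← Complex.exp_add]
  congr 1
  push_cast
  ring

lemma odd_int_zero (n : ℕ) (y : ℝ) :
    (∫ θ in (-π)..π, Real.sin (y * Real.sin θ - n * θ)) = 0 := by
  have hcont : Continuous fun θ : ℝ => Real.sin (y * Real.sin θ - n * θ) := by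
    continuity
  have h1 : (∫ θ in (-π)..(0:ℝ), Real.sin (y * Real.sin θ - n * θ)) =
      ∫ θ in (0:ℝ)..π, Real.sin (y * Real.sin (-θ) - n * (-θ)) := by
    rw [intervalIntegral.integral_comp_neg (fun θ => Real.sin (y * Real.sin θ - n * θ))]
    norm_num
  have h2 : (∫ θ in (0:ℝ)..π, Real.sin (y * Real.sin (-θ) - n * (-θ))) =
      - ∫ θ in (0:ℝ)..π, Real.sin (y * Real.sin θ - n * θ) := by
    rw [← intervalIntegral.integral_neg]
    congr 1; funext θ
    rw [Real.sin_neg, show y * -Real.sin θ - n * (-θ) = -(y * Real.sin θ - n * θ) by ring,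
      Real.sin_neg]
  rw [← intervalIntegral.integral_add_adjacent_intervals (a := -π) (b := 0) (c := π)
    (hcont.intervalIntegrable _ _) (hcont.intervalIntegrable _ _), h1, h2]
  ring

lemma even_int (n : ℕ) (y : ℝ) :
    (∫ θ in (-π)..π, Real.cos (n * θ - y * Real.sin θ)) =
      2 * ∫ θ in (0:ℝ)..π, Real.cos (n * θ - y * Real.sin θ) := by
  have hcont : Continuous fun θ : ℝ => Real.cos (n * θ - y * Real.sin θ) := by
    continuity
  have h1 : (∫ θ in (-π)..(0:ℝ), Real.cos (n * θ - y * Real.sin θ)) =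
      ∫ θ in (0:ℝ)..π, Real.cos (n * θ - y * Real.sin θ) := by
    rw [show (∫ θ in (0:ℝ)..π, Real.cos (n * θ - y * Real.sin θ)) =
        ∫ θ in (0:ℝ)..π, Real.cos (n * (-θ) - y * Real.sin (-θ)) from ?_,
      intervalIntegral.integral_comp_neg (fun θ => Real.cos (n * θ - y * Real.sin θ))]
    · norm_num
    · congr 1; funext θ; rw [Real.sin_neg, ← Real.cos_neg]; ring_nf
  rw [← intervalIntegral.integral_add_adjacent_intervals (a := -π) (b := 0) (c := π)
    (hcont.intervalIntegrable _ _) (hcont.intervalIntegrable _ _), h1]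
  ring

lemma cint (n : ℕ) (y : ℝ) :
    (∫ θ in (-π)..π, Complex.exp (Complex.I * (↑y * ↑(Real.sin θ) - ↑n * ↑θ))) =
      ((∫ θ in (-π)..π, Real.cos (↑n * θ - y * Real.sin θ) : ℝ) : ℂ) := by
  have key : ∀ θ : ℝ, Complex.exp (Complex.I * (↑y * ↑(Real.sin θ) - ↑n * ↑θ)) =
      ((Real.cos (↑n * θ - y * Real.sin θ) : ℝ) : ℂ) +
        ((Real.sin (y * Real.sin θ - ↑n * θ) : ℝ) : ℂ) * Complex.I := by
    intro θ
    rw [mul_comm, show ((y:ℂ) * ↑(Real.sin θ) - ↑n * ↑θ) =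
        ((y * Real.sin θ - n * θ : ℝ) : ℂ) by push_cast; ring,
      Complex.exp_mul_I, ← Complex.ofReal_cos, ← Complex.ofReal_sin]
    congr 2
    rw [← Real.cos_neg]
    congr 1
    ring
  simp_rw [key]
  rw [intervalIntegral.integral_add
      ((Continuous.intervalIntegrable (by continuity) _ _))
      ((Continuous.intervalIntegrable (by continuity) _ _)),
    intervalIntegral.integral_mul_const, intervalIntegral.integral_ofReal,
    intervalIntegral.integral_ofReal, odd_int_zero]
  simp

lemma circle_eq (n : ℕ) (y : ℝ) :
    (∮ z in C(0, 1), kapF n y z) = Complex.I * ((2 * π * besselJ n y : ℝ) : ℂ) := by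
  have hper : Function.Periodic
      (fun θ : ℝ => Complex.exp (Complex.I * (↑y * ↑(Real.sin θ) - ↑n * ↑θ))) (2*π) := by
    intro θ
    simp only
    rw [Real.sin_add_two_pi, show Complex.I * (↑y * ↑(Real.sin θ) - ↑n * ↑(θ + 2*π)) =
      Complex.I * (↑y * ↑(Real.sin θ) - ↑n * ↑θ) + (-(n:ℤ)) * (2*π*Complex.I) by
        push_cast; ring,
      Complex.exp_add]
    have h1 : Complex.exp (-(n:ℂ) * (2 * ↑π * Complex.I)) = 1 := by
      simpa using Complex.exp_int_mul_two_pi_mul_I (-(n:ℤ))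
    push_cast
    rw [h1, mul_one]
  have hshift := hper.intervalIntegral_add_eq 0 (-π)
  rw [zero_add, show -π + 2*π = π by ring] at hshift
  calc (∮ z in C(0,1), kapF n y z)
      = ∫ θ in (0:ℝ)..2*π, Complex.I * Complex.exp (Complex.I * (↑y * ↑(Real.sin θ) - ↑n * ↑θ)) := by
        rw [circleIntegral]
        exact intervalIntegral.integral_congr (fun θ _ => integrand_eq n y θ)
    _ = Complex.I * ∫ θ in (0:ℝ)..2*π, Complex.exp (Complex.I * (↑y * ↑(Real.sin θ) - ↑n * ↑θ)) :=
        intervalIntegral.integral_const_mul _ _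
    _ = Complex.I * ((2 * π * besselJ n y : ℝ) : ℂ) := by
        rw [hshift, cint, even_int]
        congr 1
        rw [besselJ]
        push_cast
        have hπ : (π : ℝ) ≠ 0 := Real.pi_ne_zero
        have hπc : (π : ℂ) ≠ 0 := Complex.ofReal_ne_zero.mpr hπ
        field_simp

lemma besselJ_bound (n : ℕ) (y : ℝ) {r : ℝ} (hr : 1 ≤ r) :
    |besselJ n y| ≤ Real.exp (|y| / 2 * (r - 1/r)) * r ^ (-(n:ℤ)) := by
  have hr0 : (0:ℝ) < r := lt_of_lt_of_le one_pos hr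
  have hann : (∮ z in C(0, r), kapF n y z) = ∮ z in C(0, 1), kapF n y z := by
    apply Complex.circleIntegral_eq_of_differentiable_on_annulus_off_countable one_pos hr
      Set.countable_empty
    · intro z hz
      have hz0 : z ≠ 0 := by
        rintro rfl; exact hz.2 (Metric.mem_ball_self one_pos)
      exact (kapF_diff n y hz0).continuousAt.continuousWithinAt
    · intro z hz
      have hz0 : z ≠ 0 := by
        rintro rfl; exact hz.1.2 (Metric.mem_closedBall_self one_pos.le)
      exact kapF_diff n y hz0
  have hbnd : ∀ z ∈ Metric.sphere (0:ℂ) r, ‖kapF n y z‖ ≤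
      Real.exp (|y| / 2 * (r - 1/r)) * r ^ (-(n+1:ℤ)) := by
    intro z hz
    rw [mem_sphere_iff_norm, sub_zero] at hz
    have hz0 : z ≠ 0 := by rintro rfl; simp at hz; exact absurd hz.symm hr0.ne'
    rw [kapF, norm_mul, norm_zpow, hz]
    have hre : ((y : ℂ) / 2 * (z - z⁻¹)).re = y / 2 * (z.re * (1 - 1 / r ^ 2)) := by
      rw [show (y:ℂ)/2 = ((y/2 : ℝ) : ℂ) by push_cast; ring, Complex.re_ofReal_mul]
      rw [Complex.sub_re, Complex.inv_re, Complex.normSq_eq_norm_sq, hz]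
      ring
    have hexp : ‖Complex.exp ((y : ℂ) / 2 * (z - z⁻¹))‖ ≤
        Real.exp (|y| / 2 * (r - 1/r)) := by
      rw [Complex.norm_exp, Real.exp_le_exp, hre]
      have h1 : (0:ℝ) ≤ 1 - 1 / r ^ 2 := by
        rw [sub_nonneg, div_le_one (by positivity)]
        nlinarith
      have h2 : |z.re| ≤ r := by rw [← hz]; exact Complex.abs_re_le_norm z
      calc y / 2 * (z.re * (1 - 1 / r ^ 2)) ≤ |y / 2 * (z.re * (1 - 1 / r ^ 2))| := le_abs_self _
        _ = |y| / 2 * (|z.re| * (1 - 1 / r ^ 2)) := by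
            rw [abs_mul, abs_mul, abs_div, abs_of_nonneg h1]; norm_num
        _ ≤ |y| / 2 * (r * (1 - 1 / r ^ 2)) := by
            apply mul_le_mul_of_nonneg_left (mul_le_mul_of_nonneg_right h2 h1) (by positivity)
        _ = |y| / 2 * (r - 1/r) := by field_simp
    exact mul_le_mul_of_nonneg_right hexp (zpow_nonneg hr0.le _)
  have hmain := circleIntegral.norm_integral_le_of_norm_le_const hr0.le hbnd
  rw [hann, circle_eq] at hmain
  rw [norm_mul, Complex.norm_I, one_mul, Complex.norm_real, Real.norm_eq_abs, abs_mul,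
    abs_of_pos Real.two_pi_pos] at hmain
  have hz1 : r * (Real.exp (|y| / 2 * (r - 1/r)) * r ^ (-(n+1:ℤ))) =
      Real.exp (|y| / 2 * (r - 1/r)) * r ^ (-(n:ℤ)) := by
    have : r ^ (-(n:ℤ)) = r ^ (-(n+1:ℤ)) * r := by
      rw [← zpow_add_one₀ hr0.ne']; congr 1; ring
    rw [this]; ring
  nlinarith [Real.two_pi_pos, hmain, hz1]

lemma besselJ_zero (n : ℕ) (hn : 1 ≤ n) : besselJ n 0 = 0 := by
  rw [besselJ]
  have key : ∀ θ : ℝ, Real.cos (((n:ℤ) : ℝ) * θ - 0 * Real.sin θ) =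
      (fun u => Real.cos u) ((n:ℝ) * θ) := by intro θ; push_cast; ring_nf
  rw [intervalIntegral.integral_congr (g := fun θ => (fun u => Real.cos u) ((n:ℝ) * θ))
    (fun θ _ => key θ)]
  have hn0 : ((n:ℝ)) ≠ 0 := Nat.cast_ne_zero.mpr (by omega)
  rw [intervalIntegral.integral_comp_mul_left _ hn0]
  simp [Real.sin_nat_mul_pi]

/-- Kapteyn's inequality: for every integer `n ≥ 1` and `|x| ≤ 1`,
`|J_n(n x)| ≤ (|x| exp(√(1 − x²)) / (1 + √(1 − x²)))^n`. -/
theorem kapteyn_inequality (n : ℕ) (hn : 1 ≤ n) (x : ℝ) (hx : |x| ≤ 1) :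
    |besselJ n (n * x)| ≤
      (|x| * Real.exp (Real.sqrt (1 - x ^ 2)) / (1 + Real.sqrt (1 - x ^ 2))) ^ n := by
  have hs0 : (0:ℝ) ≤ 1 - x ^ 2 := by nlinarith [sq_abs x, abs_nonneg x]
  set s := Real.sqrt (1 - x ^ 2) with hs
  have hs_nonneg : 0 ≤ s := Real.sqrt_nonneg _
  have hs_sq : s ^ 2 = 1 - x ^ 2 := Real.sq_sqrt hs0
  rcases eq_or_lt_of_le (abs_nonneg x) with h0 | h0
  · have hx0 : x = 0 := abs_eq_zero.mp h0.symm
    subst hx0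
    rw [mul_zero, besselJ_zero n hn]
    simp [zero_pow (by omega : n ≠ 0)]
  · set a := |x| with ha
    have ha1 : a ≤ 1 := hx
    have h1s : (0:ℝ) < 1 + s := by linarith
    set r := (1 + s) / a with hr_def
    have hr : 1 ≤ r := by
      rw [le_div_iff₀ h0]; linarith
    have hb := besselJ_bound n (n * x) hr
    have hna : |(n:ℝ) * x| = n * a := by
      rw [abs_mul, Nat.abs_cast]
    have hrinv : 1 / r = a / (1 + s) := by
      rw [hr_def, one_div_div]
    have hsub : r - 1 / r = 2 * s / a := by
      rw [hrinv, hr_def]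
      rw [div_sub_div _ _ (ne_of_gt h0) (ne_of_gt h1s)]
      have hnum : (1 + s) * (1 + s) - a * a = 2 * s * (1 + s) := by
        nlinarith [hs_sq, sq_abs x]
      rw [hnum]
      rw [mul_comm (2*s) (1+s), mul_comm a (1+s), mul_div_mul_left _ _ (ne_of_gt h1s)]
    have hexp_arg : (n : ℝ) * a / 2 * (2 * s / a) = n * s := by
      field_simp
    have hrpow : r ^ (-(n:ℤ)) = (a / (1 + s)) ^ n := by
      rw [zpow_neg, zpow_natCast, ← inv_pow, ← hrinv, one_div]
    rw [hna, hsub, hexp_arg, hrpow] at hb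
    calc |besselJ n ((n:ℝ) * x)| ≤ Real.exp ((n:ℝ) * s) * (a / (1 + s)) ^ n := hb
      _ = (a * Real.exp s / (1 + s)) ^ n := by
          rw [Real.exp_nat_mul, ← mul_pow]
          congr 1
          ring
end

section
/- Failure of favorable propagation when the angle-of-arrival gap shrinks as 2π/N: let d > 0, and for each integer N ≥ 2 set R_N = d/(2 sin(π/N)) and φ_2 = 2π/N, so that z_N = 4π R_N sin(φ_2/2) = 2π d for every N, and define α_N = (1/N) ∑_{n=0}^{N−1} exp( i · 2π d · sin(2πn/N − π/N) ). Then lim_{N→∞} α_N = J_0(2π d), where J_0(x) = (1/π) ∫₀^π cos(x sin θ) dθ is the Bessel function of the first kind of order 0. Consequently, if 2πd is not a zero of J_0, the inter-user interference leakage does not vanish as N → ∞. -/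
open Real Complex Filter Finset intervalIntegral

/-- Bessel function of the first kind of order 0:
`J_0(x) = (1/π) ∫₀^π cos(x sin θ) dθ`. -/
noncomputable def besselJ0 (x : ℝ) : ℝ :=
  (1 / π) * ∫ θ in (0 : ℝ)..π, Real.cos (x * Real.sin θ)


lemma abs_sin_sub_sin_le (a b : ℝ) : |Real.sin a - Real.sin b| ≤ |a - b| := by
  have h1 : |Real.sin ((a - b) / 2)| ≤ |(a - b) / 2| := Real.abs_sin_le_abs
  have h2 : |Real.cos ((a + b) / 2)| ≤ 1 := Real.abs_cos_le_one _
  have h3 : |(a - b) / 2| = |a - b| / 2 := by rw [abs_div]; norm_num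
  have h4 : |(2 : ℝ)| = 2 := by norm_num
  rw [Real.sin_sub_sin, abs_mul, abs_mul, h4]
  nlinarith [abs_nonneg (Real.sin ((a - b) / 2)), abs_nonneg (a - b)]


/-- `|e^{ia} - e^{ib}| ≤ |a - b|` for real `a b`. -/
lemma abs_expI_sub_expI (a b : ℝ) :
    ‖Complex.exp (Complex.I * a) - Complex.exp (Complex.I * b)‖ ≤ |a - b| := by
  have h1 : Complex.exp (Complex.I * a) - Complex.exp (Complex.I * b)
      = ((Real.cos a - Real.cos b : ℝ) : ℂ) + ((Real.sin a - Real.sin b : ℝ) : ℂ) * Complex.I := by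
    rw [mul_comm Complex.I (a : ℂ), mul_comm Complex.I (b : ℂ),
      Complex.exp_mul_I, Complex.exp_mul_I, ← Complex.ofReal_cos, ← Complex.ofReal_cos,
      ← Complex.ofReal_sin, ← Complex.ofReal_sin]
    push_cast
    ring
  rw [h1, Complex.norm_def, Complex.normSq_add_mul_I]
  rw [show |a - b| = Real.sqrt ((a - b) ^ 2) from (Real.sqrt_sq_eq_abs _).symm]
  apply Real.sqrt_le_sqrt
  nlinarith [Real.sin_sq_add_cos_sq a, Real.sin_sq_add_cos_sq b, Real.cos_sub a b,
    Real.one_sub_sq_div_two_le_cos (x := a - b)]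


lemma sin_int_zero (c : ℝ) :
    (∫ θ in (0:ℝ)..(2*π), Real.sin (c * Real.sin θ)) = 0 := by
  have hcont : Continuous fun θ : ℝ => Real.sin (c * Real.sin θ) := by fun_prop
  have hsplit : (∫ θ in (0:ℝ)..(2*π), Real.sin (c * Real.sin θ))
      = (∫ θ in (0:ℝ)..π, Real.sin (c * Real.sin θ))
        + ∫ θ in π..(2*π), Real.sin (c * Real.sin θ) :=
    (integral_add_adjacent_intervals (hcont.intervalIntegrable _ _)
      (hcont.intervalIntegrable _ _)).symm
  have hshift : (∫ θ in π..(2*π), Real.sin (c * Real.sin θ))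
      = ∫ θ in (0:ℝ)..π, Real.sin (c * Real.sin (θ + π)) := by
    rw [intervalIntegral.integral_comp_add_right (fun θ => Real.sin (c * Real.sin θ)) π]
    norm_num [two_mul]
  have heq : ∀ θ : ℝ, Real.sin (c * Real.sin (θ + π)) = - Real.sin (c * Real.sin θ) := by
    intro θ; rw [Real.sin_add_pi, mul_neg, Real.sin_neg]
  rw [hsplit, hshift]
  simp only [heq, intervalIntegral.integral_neg]
  ring

lemma cos_int_double (c : ℝ) :
    (∫ θ in (0:ℝ)..(2*π), Real.cos (c * Real.sin θ))
      = 2 * ∫ θ in (0:ℝ)..π, Real.cos (c * Real.sin θ) := by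
  have hcont : Continuous fun θ : ℝ => Real.cos (c * Real.sin θ) := by fun_prop
  have hsplit : (∫ θ in (0:ℝ)..(2*π), Real.cos (c * Real.sin θ))
      = (∫ θ in (0:ℝ)..π, Real.cos (c * Real.sin θ))
        + ∫ θ in π..(2*π), Real.cos (c * Real.sin θ) :=
    (integral_add_adjacent_intervals (hcont.intervalIntegrable _ _)
      (hcont.intervalIntegrable _ _)).symm
  have hshift : (∫ θ in π..(2*π), Real.cos (c * Real.sin θ))
      = ∫ θ in (0:ℝ)..π, Real.cos (c * Real.sin (θ + π)) := by
    rw [intervalIntegral.integral_comp_add_right (fun θ => Real.cos (c * Real.sin θ)) π]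
    norm_num [two_mul]
  have heq : ∀ θ : ℝ, Real.cos (c * Real.sin (θ + π)) = Real.cos (c * Real.sin θ) := by
    intro θ; rw [Real.sin_add_pi, mul_neg, Real.cos_neg]
  rw [hsplit, hshift]
  simp only [heq]
  ring

lemma exp_int_eq (c : ℝ) :
    (∫ θ in (0:ℝ)..(2*π), Complex.exp (Complex.I * ((c * Real.sin θ : ℝ) : ℂ)))
      = ((∫ θ in (0:ℝ)..(2*π), Real.cos (c * Real.sin θ) : ℝ) : ℂ) := by
  have hfeq : ∀ θ : ℝ, Complex.exp (Complex.I * ((c * Real.sin θ : ℝ) : ℂ))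
      = ((Real.cos (c * Real.sin θ) : ℝ) : ℂ)
        + ((Real.sin (c * Real.sin θ) : ℝ) : ℂ) * Complex.I := by
    intro θ
    rw [mul_comm, Complex.exp_mul_I, ← Complex.ofReal_cos, ← Complex.ofReal_sin]
  have h1 : Continuous fun θ : ℝ => ((Real.cos (c * Real.sin θ) : ℝ) : ℂ) := by fun_prop
  have h2 : Continuous fun θ : ℝ => ((Real.sin (c * Real.sin θ) : ℝ) : ℂ) * Complex.I := by
    fun_prop
  simp only [hfeq]
  rw [intervalIntegral.integral_add (h1.intervalIntegrable _ _) (h2.intervalIntegrable _ _),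
    intervalIntegral.integral_mul_const, intervalIntegral.integral_ofReal,
    intervalIntegral.integral_ofReal, sin_int_zero]
  simp

lemma riemann_bound (c : ℝ) (hc : 0 ≤ c) (N : ℕ) (hN : 1 ≤ N) :
    ‖(1 / (N : ℂ)) * (∑ n ∈ Finset.range N,
        Complex.exp (Complex.I * ((c * Real.sin (2 * π * n / N - π / N) : ℝ) : ℂ)))
      - (((2 * π : ℝ))⁻¹ : ℂ) *
        ∫ θ in (0:ℝ)..(2*π), Complex.exp (Complex.I * ((c * Real.sin θ : ℝ) : ℂ))‖
      ≤ 2 * π * c / N := by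
  have hπ := Real.pi_pos
  have hN0 : (N : ℝ) ≠ 0 := by positivity
  set f : ℝ → ℂ := fun θ => Complex.exp (Complex.I * ((c * Real.sin θ : ℝ) : ℂ)) with hfdef
  set a : ℕ → ℝ := fun k => 2 * π * k / N - π / N with ha
  have hf : Continuous f := by
    apply Complex.continuous_exp.comp
    fun_prop
  have hstep : ∀ k : ℕ, a (k + 1) = a k + 2 * π / N := by
    intro k; simp only [ha]; push_cast; field_simp; ring
  have hsum : ∑ k ∈ Finset.range N, (∫ x in a k..a (k+1), f x) = ∫ x in (a 0)..(a N), f x :=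
    intervalIntegral.sum_integral_adjacent_intervals (fun k _ => hf.intervalIntegrable _ _)
  have haN : a N = a 0 + 2 * π := by simp only [ha]; push_cast; field_simp; ring
  have hper : Function.Periodic f (2 * π) := by
    intro θ; simp only [hfdef, Real.sin_add_two_pi]
  have hI : (∫ x in (a 0)..(a N), f x) = ∫ θ in (0:ℝ)..(2*π), f θ := by
    rw [haN]
    simpa using hper.intervalIntegral_add_eq (a 0) 0
  have hterm : ∀ n : ℕ, ‖(((2 * π / N : ℝ)) : ℂ) * f (a n) - ∫ x in a n..a (n+1), f x‖
      ≤ c * (2 * π / N) ^ 2 := by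
    intro n
    have hconst : (((2 * π / (N:ℝ)) : ℝ) : ℂ) * f (a n) = ∫ x in a n..a (n+1), f (a n) := by
      rw [intervalIntegral.integral_const, hstep n]
      simp [Complex.real_smul]
    rw [hconst, ← intervalIntegral.integral_sub (intervalIntegrable_const)
      (hf.intervalIntegrable _ _)]
    have hbd : ∀ x ∈ Set.uIoc (a n) (a (n+1)), ‖f (a n) - f x‖ ≤ c * (2 * π / N) := by
      intro x hx
      have hle : a n ≤ a (n+1) := by
        have : (0:ℝ) < 2 * π / N := by positivity
        rw [hstep n]; linarith
      rw [Set.uIoc_of_le hle, hstep n] at hx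
      have h1 : ‖f (a n) - f x‖ ≤ |c * Real.sin (a n) - c * Real.sin x| :=
        abs_expI_sub_expI (c * Real.sin (a n)) (c * Real.sin x)
      have h2 : |c * Real.sin (a n) - c * Real.sin x| = c * |Real.sin (a n) - Real.sin x| := by
        rw [← mul_sub, abs_mul, _root_.abs_of_nonneg hc]
      have h3 : |Real.sin (a n) - Real.sin x| ≤ |a n - x| := _root_.abs_sin_sub_sin_le _ _
      have h4 : |a n - x| ≤ 2 * π / N := by
        rw [abs_sub_comm, _root_.abs_of_nonneg (by linarith [hx.1] : (0:ℝ) ≤ x - a n)]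
        linarith [hx.2]
      calc ‖f (a n) - f x‖ ≤ c * |Real.sin (a n) - Real.sin x| := by rw [← h2]; exact h1
        _ ≤ c * |a n - x| := by gcongr
        _ ≤ c * (2 * π / N) := by gcongr
    calc ‖∫ x in a n..a (n+1), (f (a n) - f x)‖ ≤ c * (2 * π / N) * |a (n+1) - a n| :=
          intervalIntegral.norm_integral_le_of_norm_le_const hbd
      _ = c * (2 * π / N) ^ 2 := by
          rw [hstep n]
          rw [show a n + 2 * π / N - a n = 2 * π / N by ring,
            _root_.abs_of_nonneg (by positivity)]
          ring
  have hfact : (1 / (N : ℂ)) * (∑ n ∈ Finset.range N, f (a n))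
      - (((2 * π : ℝ))⁻¹ : ℂ) * ∫ θ in (0:ℝ)..(2*π), f θ
      = (((2 * π : ℝ)⁻¹ : ℝ) : ℂ) * (∑ n ∈ Finset.range N,
          ((((2 * π / N : ℝ)) : ℂ) * f (a n) - ∫ x in a n..a (n+1), f x)) := by
    rw [Finset.sum_sub_distrib, hsum, hI, mul_sub, ← Finset.mul_sum, ← mul_assoc]
    have hπ0 : (π : ℂ) ≠ 0 := Complex.ofReal_ne_zero.mpr (ne_of_gt hπ)
    have hN0' : (N : ℂ) ≠ 0 := Nat.cast_ne_zero.mpr (by omega)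
    push_cast
    field_simp
  have key : ‖(1 / (N : ℂ)) * (∑ n ∈ Finset.range N, f (a n))
      - (((2 * π : ℝ))⁻¹ : ℂ) * ∫ θ in (0:ℝ)..(2*π), f θ‖ ≤ 2 * π * c / N := by
    rw [hfact]
    rw [norm_mul]
    have h5 : ‖(((2 * π : ℝ)⁻¹ : ℝ) : ℂ)‖ = (2 * π)⁻¹ := by
      rw [Complex.norm_real, Real.norm_eq_abs, abs_of_pos (by positivity)]
    rw [h5]
    have h6 : ‖∑ n ∈ Finset.range N,
        ((((2 * π / N : ℝ)) : ℂ) * f (a n) - ∫ x in a n..a (n+1), f x)‖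
        ≤ N * (c * (2 * π / N) ^ 2) := by
      calc _ ≤ ∑ n ∈ Finset.range N, ‖(((2 * π / N : ℝ)) : ℂ) * f (a n)
            - ∫ x in a n..a (n+1), f x‖ := norm_sum_le _ _
        _ ≤ ∑ _n ∈ Finset.range N, c * (2 * π / N) ^ 2 :=
            Finset.sum_le_sum (fun n _ => hterm n)
        _ = N * (c * (2 * π / N) ^ 2) := by rw [Finset.sum_const, Finset.card_range]; ring
    calc (2 * π)⁻¹ * ‖_‖ ≤ (2 * π)⁻¹ * (N * (c * (2 * π / N) ^ 2)) := by gcongr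
      _ = 2 * π * c / N := by field_simp
  exact key


/-- failure of favorable propagation when the AoA gap shrinks as `2π/N`:
for `d > 0`, with `φ_2 = 2π/N` and `R_N = d/(2 sin(π/N))` one has
`z_N = 4π R_N sin(φ_2/2) = 2πd` for every `N`, and
`α_N = (1/N) ∑_{n<N} exp(i · 2πd · sin(2πn/N − π/N)) → J_0(2πd)` as `N → ∞`.
Consequently, if `2πd` is not a zero of `J_0`, the inter-user interference leakage
does not vanish as `N → ∞`. -/
theorem uca_no_fp_shrinking_gap (d : ℝ) (hd : 0 < d) (α : ℕ → ℂ)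
    (hα : ∀ N : ℕ, α N = (1 / (N : ℂ)) * ∑ n ∈ Finset.range N,
      Complex.exp (Complex.I *
        ((2 * π * d * Real.sin (2 * π * n / N - π / N) : ℝ) : ℂ))) :
    Tendsto α atTop (nhds ((besselJ0 (2 * π * d) : ℝ) : ℂ)) ∧
    (besselJ0 (2 * π * d) ≠ 0 →
      ¬ Tendsto (fun N : ℕ => ‖α N‖) atTop (nhds 0)) := by
  have hπ := Real.pi_pos
  set c : ℝ := 2 * π * d with hc
  have hc0 : 0 ≤ c := by positivity
  have hL : (((2 * π : ℝ))⁻¹ : ℂ) *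
      (∫ θ in (0:ℝ)..(2*π), Complex.exp (Complex.I * ((c * Real.sin θ : ℝ) : ℂ)))
      = ((besselJ0 c : ℝ) : ℂ) := by
    rw [exp_int_eq, cos_int_double]
    unfold besselJ0
    have hπ0 : (π : ℂ) ≠ 0 := Complex.ofReal_ne_zero.mpr (ne_of_gt hπ)
    push_cast
    field_simp
  have hmain : Tendsto α atTop (nhds ((besselJ0 c : ℝ) : ℂ)) := by
    rw [tendsto_iff_norm_sub_tendsto_zero]
    apply squeeze_zero' (g := fun N : ℕ => 2 * π * c / N)
    · filter_upwards with N using norm_nonneg _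
    · filter_upwards [eventually_ge_atTop 1] with N hN
      rw [hα N, ← hL]
      exact riemann_bound c hc0 N hN
    · exact tendsto_const_div_atTop_nhds_zero_nat (2 * π * c)
  refine ⟨hmain, ?_⟩
  intro hJ hzero
  have h2 : Tendsto (fun N => ‖α N‖) atTop
      (nhds (‖((besselJ0 c : ℝ) : ℂ)‖)) :=
    (continuous_norm.tendsto _).comp hmain
  have h3 := tendsto_nhds_unique hzero h2
  rw [Complex.norm_real, Real.norm_eq_abs] at h3
  exact hJ (abs_eq_zero.mp h3.symm)
end
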